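/- (Finite-class uniform deviation of the Pconf multicalibration estimator.) Assume 0 < π₊ < 1, P₋ is absolutely continuous with respect to P₊, and let r := π₊ · (dP₊/dP_X) with P_X := π₊·P₊ + π₋·P₋; assume there is C_r > 0 with r(x) ≥ C_r for P₊-almost every x. Let 𝒞 be a nonempty finite set of measurable functions c : 𝒳 → [−1,1], 𝒲 a nonempty finite set of measurable functions w : [0,1] → [−1,1], f : 𝒳 → [0,1] measurable, n ≥ 1, δ ∈ (0,1). For s ∈ 𝒳^{n} define Ĥ_{c,w}(s) := (π₊/n)·Σ_{i=1}^{n} c(s_i)·w(f(s_i))·(1 − f(s_i)/r(s_i)). Then under the product measure P₊^{⊗ n}, with probability at least 1 − δ, max_{c ∈ 𝒞, w ∈ 𝒲} |Ĥ_{c,w}(s) − R_{c,w}(f)| ≤ π₊·(1 + 1/C_r)·√(2·log(2·|𝒞|·|𝒲|/δ)/n). -/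

import Mathlib

open MeasureTheory

open Real ProbabilityTheory
open scoped ENNReal

lemma hoeffding_two_point {p : ℝ} (hp0 : 0 ≤ p) (hp1 : p ≤ 1) (u : ℝ) :
    (1 - p) * Real.exp (-u) + p * Real.exp u ≤ Real.exp ((2*p-1)*u + u^2/2) := by
  set A : ℝ → ℝ := fun v => (1 - p) * Real.exp (-v) + p * Real.exp v with hAdef
  set D : ℝ → ℝ := fun v => p * Real.exp v - (1 - p) * Real.exp (-v) with hDdef
  have hApos : ∀ v, 0 < A v := by
    intro v
    rcases lt_or_ge p 1 with h | h
    · exact add_pos_of_pos_of_nonneg (mul_pos (by linarith) (Real.exp_pos _))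
        (mul_nonneg hp0 (Real.exp_pos _).le)
    · have hp : p = 1 := le_antisymm hp1 h
      have : A v = Real.exp v := by simp [hAdef, hp]
      rw [this]; exact Real.exp_pos _
  have hexp_neg : ∀ v : ℝ, HasDerivAt (fun w : ℝ => Real.exp (-w)) (-Real.exp (-v)) v := by
    intro v
    simpa using (hasDerivAt_neg v).exp
  have hA' : ∀ v, HasDerivAt A (D v) v := by
    intro v
    have h := ((hexp_neg v).const_mul (1 - p)).add ((Real.hasDerivAt_exp v).const_mul p)
    refine h.congr_deriv ?_
    simp [hDdef]; ring
  have hD' : ∀ v, HasDerivAt D (A v) v := by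
    intro v
    have h := ((Real.hasDerivAt_exp v).const_mul p).sub ((hexp_neg v).const_mul (1 - p))
    refine h.congr_deriv ?_
    simp [hAdef]; ring
  set φ : ℝ → ℝ := fun v => (2*p-1)*v + v^2/2 - Real.log (A v) with hφdef
  set ψ : ℝ → ℝ := fun v => (2*p-1) + v - D v / A v with hψdef
  have hφ' : ∀ v, HasDerivAt φ (ψ v) v := by
    intro v
    have h1 : HasDerivAt (fun w : ℝ => (2*p-1)*w + w^2/2) ((2*p-1) + v) v := by
      have h := ((hasDerivAt_id v).const_mul (2*p-1)).add ((hasDerivAt_pow 2 v).div_const 2)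
      refine h.congr_deriv ?_
      norm_num
    have h2 : HasDerivAt (fun w => Real.log (A w)) (D v / A v) v := (hA' v).log (hApos v).ne'
    exact h1.sub h2
  have hψ' : ∀ v, HasDerivAt ψ ((D v / A v)^2) v := by
    intro v
    have h2 : HasDerivAt (fun w => D w / A w) ((A v * A v - D v * D v) / A v ^ 2) v :=
      (hD' v).div (hA' v) (hApos v).ne'
    have h1 : HasDerivAt (fun w : ℝ => (2*p-1) + w) 1 v := (hasDerivAt_id v).const_add (2*p-1)
    have h := h1.sub h2
    refine h.congr_deriv ?_
    have hAne : A v ≠ 0 := (hApos v).ne'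
    field_simp
    ring
  have hψmono : Monotone ψ :=
    monotone_of_deriv_nonneg (fun v => (hψ' v).differentiableAt)
      (fun v => by rw [(hψ' v).deriv]; positivity)
  have hA0 : A 0 = 1 := by simp [hAdef]
  have hψ0 : ψ 0 = 0 := by
    simp only [hψdef, hA0, hDdef]
    simp
    ring
  have hφ0 : φ 0 = 0 := by simp [hφdef, hA0]
  have hφcont : Continuous φ :=
    continuous_iff_continuousAt.mpr fun v => (hφ' v).differentiableAt.continuousAt
  have key : 0 ≤ φ u := by
    rcases le_or_gt 0 u with h | h
    · have hm : MonotoneOn φ (Set.Ici 0) :=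
        monotoneOn_of_deriv_nonneg (convex_Ici 0) hφcont.continuousOn
          (fun w _ => (hφ' w).differentiableAt.differentiableWithinAt)
          (fun w hw => by
            rw [(hφ' w).deriv, ← hψ0]
            have hw0 : (0:ℝ) ≤ w := by
              have : w ∈ Set.Ioi (0:ℝ) := by simpa [interior_Ici] using hw
              exact (Set.mem_Ioi.mp this).le
            exact hψmono hw0)
      have := hm Set.self_mem_Ici (Set.mem_Ici.mpr h) h
      rwa [hφ0] at this
    · have hm : AntitoneOn φ (Set.Iic 0) :=
        antitoneOn_of_deriv_nonpos (convex_Iic 0) hφcont.continuousOn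
          (fun w _ => (hφ' w).differentiableAt.differentiableWithinAt)
          (fun w hw => by
            rw [(hφ' w).deriv, ← hψ0]
            have hw0 : w ≤ (0:ℝ) := by
              have : w ∈ Set.Iio (0:ℝ) := by simpa [interior_Iic] using hw
              exact (Set.mem_Iio.mp this).le
            exact hψmono hw0)
      have := hm (Set.mem_Iic.mpr h.le) Set.self_mem_Iic h.le
      rwa [hφ0] at this
  have hlog : Real.log (A u) ≤ (2*p-1)*u + u^2/2 := by
    have : 0 ≤ (2*p-1)*u + u^2/2 - Real.log (A u) := key
    linarith
  exact (Real.log_le_iff_le_exp (hApos u)).mp hlog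

lemma integral_exp_le_of_abs_le {Ω : Type*} [MeasurableSpace Ω] (μ : Measure Ω)
    [IsProbabilityMeasure μ] (Y : Ω → ℝ) (hY : Measurable Y) (B : ℝ) (hB : 0 < B)
    (hbd : ∀ᵐ x ∂μ, |Y x| ≤ B) (t : ℝ) :
    ∫ x, Real.exp (t * Y x) ∂μ ≤ Real.exp (t * ∫ x, Y x ∂μ + t^2*B^2/2) := by
  have hYint : Integrable Y μ := by
    refine (integrable_const B).mono' hY.aestronglyMeasurable ?_
    filter_upwards [hbd] with x hx
    simpa using hx
  set m := ∫ x, Y x ∂μ with hm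
  have hmB : |m| ≤ B := by
    have h1 : |m| ≤ ∫ x, |Y x| ∂μ := by
      simpa [Real.norm_eq_abs] using norm_integral_le_integral_norm (μ := μ) (f := Y)
    have h2 : ∫ x, |Y x| ∂μ ≤ ∫ _x, B ∂μ :=
      integral_mono_ae hYint.abs (integrable_const B) hbd
    simpa using h1.trans h2
  set c₁ : ℝ := (Real.exp (-(t*B)) + Real.exp (t*B))/2 with hc₁
  set c₂ : ℝ := (Real.exp (t*B) - Real.exp (-(t*B)))/(2*B) with hc₂
  have chord : ∀ᵐ x ∂μ, Real.exp (t * Y x) ≤ c₁ + c₂ * Y x := by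
    filter_upwards [hbd] with x hx
    have hx1 := (abs_le.mp hx).1
    have hx2 := (abs_le.mp hx).2
    have h1 : (0:ℝ) ≤ (B - Y x)/(2*B) := div_nonneg (by linarith) (by linarith)
    have h2 : (0:ℝ) ≤ (B + Y x)/(2*B) := div_nonneg (by linarith) (by linarith)
    have h3 : (B - Y x)/(2*B) + (B + Y x)/(2*B) = 1 := by field_simp; ring
    have hconv := convexOn_exp.2 (Set.mem_univ (-(t*B))) (Set.mem_univ (t*B)) h1 h2 h3
    have harg : ((B - Y x)/(2*B)) • (-(t*B)) + ((B + Y x)/(2*B)) • (t*B) = t * Y x := by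
      simp only [smul_eq_mul]
      rw [div_mul_eq_mul_div, div_mul_eq_mul_div, ← add_div,
        div_eq_iff (ne_of_gt (by linarith : (0:ℝ) < 2*B))]
      ring
    rw [harg] at hconv
    refine hconv.trans_eq ?_
    simp only [smul_eq_mul, hc₁, hc₂]
    field_simp
    ring
  have hexpint : Integrable (fun x => Real.exp (t * Y x)) μ := by
    refine (integrable_const (Real.exp (|t| * B))).mono'
      ((hY.const_mul t).exp).aestronglyMeasurable ?_
    filter_upwards [hbd] with x hx
    rw [Real.norm_eq_abs, abs_of_pos (Real.exp_pos _)]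
    refine Real.exp_le_exp.mpr ?_
    calc t * Y x ≤ |t * Y x| := le_abs_self _
    _ = |t| * |Y x| := abs_mul _ _
    _ ≤ |t| * B := by
        exact mul_le_mul_of_nonneg_left hx (abs_nonneg t)
  have hint2 : Integrable (fun x => c₁ + c₂ * Y x) μ :=
    (integrable_const c₁).add (hYint.const_mul c₂)
  have step1 : ∫ x, Real.exp (t * Y x) ∂μ ≤ c₁ + c₂ * m := by
    have := integral_mono_ae hexpint hint2 chord
    simpa [integral_add (integrable_const c₁) (hYint.const_mul c₂),
      integral_const_mul, hm] using this
  set p : ℝ := (B + m)/(2*B) with hp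
  have hp0 : 0 ≤ p := by
    have := (abs_le.mp hmB).1
    have : 0 ≤ B + m := by linarith
    positivity
  have hp1 : p ≤ 1 := by
    have := (abs_le.mp hmB).2
    rw [hp, div_le_one (by positivity)]
    linarith
  have step2 : c₁ + c₂ * m = (1 - p) * Real.exp (-(t*B)) + p * Real.exp (t*B) := by
    simp only [hc₁, hc₂, hp]
    field_simp
    ring
  have step3 := hoeffding_two_point hp0 hp1 (t*B)
  have step4 : (2*p-1)*(t*B) + (t*B)^2/2 = t * m + t^2*B^2/2 := by
    simp only [hp]
    field_simp
    ring
  calc ∫ x, Real.exp (t * Y x) ∂μ ≤ c₁ + c₂ * m := step1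
  _ = (1 - p) * Real.exp (-(t*B)) + p * Real.exp (t*B) := step2
  _ ≤ Real.exp ((2*p-1)*(t*B) + (t*B)^2/2) := step3
  _ = Real.exp (t * m + t^2*B^2/2) := by rw [step4]

lemma chernoff_upper {Ω : Type*} [MeasurableSpace Ω] (μ : Measure Ω)
    [IsProbabilityMeasure μ] (Y : Ω → ℝ) (hY : Measurable Y) (B : ℝ) (hB : 0 < B)
    (hbd : ∀ᵐ x ∂μ, |Y x| ≤ B) (n : ℕ) (ε : ℝ) (hε : 0 ≤ ε) :
    (Measure.pi fun _ : Fin n => μ) {s | (n:ℝ) * ε ≤ ∑ i, (Y (s i) - ∫ x, Y x ∂μ)} ≤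
      ENNReal.ofReal (Real.exp (-(n:ℝ) * ε^2 / (2*B^2))) := by
  set m := ∫ x, Y x ∂μ with hm
  set Z : Ω → ℝ := fun x => Y x - m with hZ
  have hZmeas : Measurable Z := hY.sub measurable_const
  set t : ℝ := ε / B^2 with ht
  have ht0 : 0 ≤ t := by positivity
  have hmB : |m| ≤ B := by
    have h1 : |m| ≤ ∫ x, |Y x| ∂μ := by
      simpa [Real.norm_eq_abs] using norm_integral_le_integral_norm (μ := μ) (f := Y)
    have hYint : Integrable Y μ := by
      refine (integrable_const B).mono' hY.aestronglyMeasurable ?_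
      filter_upwards [hbd] with x hx; simpa using hx
    have h2 : ∫ x, |Y x| ∂μ ≤ ∫ _x, B ∂μ :=
      integral_mono_ae hYint.abs (integrable_const B) hbd
    simpa using h1.trans h2
  set S : (Fin n → Ω) → ℝ := fun s => ∑ i, Z (s i) with hS
  have hSmeas : Measurable S :=
    Finset.measurable_sum Finset.univ fun i _ => hZmeas.comp (measurable_pi_apply i)
  have hbdpi : ∀ᵐ s ∂(Measure.pi fun _ : Fin n => μ), ∀ i, |Y (s i)| ≤ B :=
    Filter.eventually_all.2 fun i => (Measure.tendsto_eval_ae_ae (μ := fun _ : Fin n => μ) (i := i)).eventually hbd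
  have hint : Integrable (fun s => Real.exp (t * S s)) (Measure.pi fun _ : Fin n => μ) := by
    refine (integrable_const (Real.exp (|t| * (n * (B + |m|))))).mono'
      ((hSmeas.const_mul t).exp).aestronglyMeasurable ?_
    filter_upwards [hbdpi] with s hs
    rw [Real.norm_eq_abs, abs_of_pos (Real.exp_pos _)]
    refine Real.exp_le_exp.mpr ?_
    calc t * S s ≤ |t * S s| := le_abs_self _
    _ = |t| * |S s| := abs_mul _ _
    _ ≤ |t| * (n * (B + |m|)) := by
        refine mul_le_mul_of_nonneg_left ?_ (abs_nonneg t)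
        calc |S s| ≤ ∑ i, |Z (s i)| := Finset.abs_sum_le_sum_abs _ _
        _ ≤ ∑ _i : Fin n, (B + |m|) := by
            refine Finset.sum_le_sum fun i _ => ?_
            calc |Z (s i)| = |Y (s i) - m| := rfl
            _ ≤ |Y (s i)| + |m| := abs_sub _ _
            _ ≤ B + |m| := by linarith [hs i]
        _ = n * (B + |m|) := by simp [Finset.sum_const, nsmul_eq_mul]; ring
  have hmgf : mgf S (Measure.pi fun _ : Fin n => μ) t ≤ Real.exp ((n:ℝ) * (t^2*B^2/2)) := by
    have hprod : mgf S (Measure.pi fun _ : Fin n => μ) t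
        = (∫ x, Real.exp (t * Z x) ∂μ) ^ n := by
      rw [mgf]
      letI : MeasureSpace Ω := ⟨μ⟩
      have : ∀ s : Fin n → Ω, Real.exp (t * S s) = ∏ i, Real.exp (t * Z (s i)) := by
        intro s
        rw [hS]
        simp only [Finset.mul_sum]
        exact Real.exp_sum _ _
      calc ∫ s, Real.exp (t * S s) ∂(Measure.pi fun _ : Fin n => μ)
          = ∫ s : Fin n → Ω, ∏ i, Real.exp (t * Z (s i)) := by
            simp_rw [this]; rfl
      _ = (∫ x, Real.exp (t * Z x)) ^ Fintype.card (Fin n) :=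
            integral_fintype_prod_eq_pow (ι := Fin n) (fun x => Real.exp (t * Z x))
      _ = (∫ x, Real.exp (t * Z x) ∂μ) ^ n := by simp [Fintype.card_fin]; rfl
    rw [hprod]
    have hZint : ∫ x, Z x ∂μ = 0 := by
      have hYint : Integrable Y μ := by
        refine (integrable_const B).mono' hY.aestronglyMeasurable ?_
        filter_upwards [hbd] with x hx; simpa using hx
      simp only [hZ]
      rw [integral_sub hYint (integrable_const m)]
      simp [hm]
    have hYexp := integral_exp_le_of_abs_le μ Y hY B hB hbd t
    have hZexp : ∫ x, Real.exp (t * Z x) ∂μ ≤ Real.exp (t^2*B^2/2) := by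
      have heq : ∀ x, Real.exp (t * Z x) = Real.exp (t * Y x) * Real.exp (-(t*m)) := by
        intro x
        rw [← Real.exp_add]
        congr 1
        simp only [hZ]
        ring
      calc ∫ x, Real.exp (t * Z x) ∂μ
          = (∫ x, Real.exp (t * Y x) ∂μ) * Real.exp (-(t*m)) := by
            simp_rw [heq]; exact integral_mul_const _ _
      _ ≤ Real.exp (t * m + t^2*B^2/2) * Real.exp (-(t*m)) :=
            mul_le_mul_of_nonneg_right hYexp (Real.exp_pos _).le
      _ = Real.exp (t^2*B^2/2) := by rw [← Real.exp_add]; ring_nf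
    calc (∫ x, Real.exp (t * Z x) ∂μ) ^ n ≤ (Real.exp (t^2*B^2/2)) ^ n := by
          refine pow_le_pow_left₀ (integral_nonneg fun x => (Real.exp_pos _).le) hZexp n
    _ = Real.exp ((n:ℝ) * (t^2*B^2/2)) := (Real.exp_nat_mul _ n).symm
  have hch := measure_ge_le_exp_mul_mgf (X := S) (μ := Measure.pi fun _ : Fin n => μ)
    ((n:ℝ)*ε) ht0 hint
  have hset : {s : Fin n → Ω | (n:ℝ) * ε ≤ ∑ i, (Y (s i) - m)} = {s | (n:ℝ)*ε ≤ S s} := rfl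
  rw [hset, ← ENNReal.ofReal_toReal (measure_ne_top (Measure.pi fun _ : Fin n => μ) _)]
  refine ENNReal.ofReal_le_ofReal ?_
  calc ((Measure.pi fun _ : Fin n => μ) {s | (n:ℝ)*ε ≤ S s}).toReal
      ≤ Real.exp (-t * ((n:ℝ)*ε)) * mgf S (Measure.pi fun _ : Fin n => μ) t := hch
  _ ≤ Real.exp (-t * ((n:ℝ)*ε)) * Real.exp ((n:ℝ) * (t^2*B^2/2)) :=
      mul_le_mul_of_nonneg_left hmgf (Real.exp_pos _).le
  _ = Real.exp (-(n:ℝ) * ε^2 / (2*B^2)) := by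
      rw [← Real.exp_add]
      congr 1
      simp only [ht]
      field_simp
      ring

lemma chernoff_two_sided {Ω : Type*} [MeasurableSpace Ω] (μ : Measure Ω)
    [IsProbabilityMeasure μ] (Y : Ω → ℝ) (hY : Measurable Y) (B : ℝ) (hB : 0 < B)
    (hbd : ∀ᵐ x ∂μ, |Y x| ≤ B) (n : ℕ) (ε : ℝ) (hε : 0 ≤ ε) :
    (Measure.pi fun _ : Fin n => μ) {s | (n:ℝ) * ε ≤ |∑ i, (Y (s i) - ∫ x, Y x ∂μ)|} ≤
      ENNReal.ofReal (2 * Real.exp (-(n:ℝ) * ε^2 / (2*B^2))) := by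
  have hup := chernoff_upper μ Y hY B hB hbd n ε hε
  have hbd' : ∀ᵐ x ∂μ, |(-Y) x| ≤ B := by
    filter_upwards [hbd] with x hx
    simpa using hx
  have hdown := chernoff_upper μ (-Y) hY.neg B hB hbd' n ε hε
  have hsub : {s : Fin n → Ω | (n:ℝ) * ε ≤ |∑ i, (Y (s i) - ∫ x, Y x ∂μ)|} ⊆
      {s | (n:ℝ) * ε ≤ ∑ i, (Y (s i) - ∫ x, Y x ∂μ)} ∪
      {s | (n:ℝ) * ε ≤ ∑ i, ((-Y) (s i) - ∫ x, (-Y) x ∂μ)} := by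
    intro s hs
    have hs' : (n:ℝ) * ε ≤ |∑ i, (Y (s i) - ∫ x, Y x ∂μ)| := hs
    rcases le_abs.mp hs' with h | h
    · exact Or.inl h
    · right
      have : ∑ i, ((-Y) (s i) - ∫ x, (-Y) x ∂μ) = -∑ i, (Y (s i) - ∫ x, Y x ∂μ) := by
        rw [← Finset.sum_neg_distrib]
        refine Finset.sum_congr rfl fun i _ => ?_
        simp [integral_neg]
        ring
      show (n:ℝ) * ε ≤ ∑ i, ((-Y) (s i) - ∫ x, (-Y) x ∂μ)
      rw [this]
      exact h
  calc (Measure.pi fun _ : Fin n => μ) {s | (n:ℝ) * ε ≤ |∑ i, (Y (s i) - ∫ x, Y x ∂μ)|}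
      ≤ (Measure.pi fun _ : Fin n => μ) ({s | (n:ℝ) * ε ≤ ∑ i, (Y (s i) - ∫ x, Y x ∂μ)} ∪
        {s | (n:ℝ) * ε ≤ ∑ i, ((-Y) (s i) - ∫ x, (-Y) x ∂μ)}) := measure_mono hsub
  _ ≤ (Measure.pi fun _ : Fin n => μ) {s | (n:ℝ) * ε ≤ ∑ i, (Y (s i) - ∫ x, Y x ∂μ)} +
      (Measure.pi fun _ : Fin n => μ) {s | (n:ℝ) * ε ≤ ∑ i, ((-Y) (s i) - ∫ x, (-Y) x ∂μ)} :=
      measure_union_le _ _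
  _ ≤ ENNReal.ofReal (Real.exp (-(n:ℝ) * ε^2 / (2*B^2))) +
      ENNReal.ofReal (Real.exp (-(n:ℝ) * ε^2 / (2*B^2))) := add_le_add hup hdown
  _ = ENNReal.ofReal (2 * Real.exp (-(n:ℝ) * ε^2 / (2*B^2))) := by
      rw [← ENNReal.ofReal_add (Real.exp_pos _).le (Real.exp_pos _).le]
      congr 1
      ring

set_option maxHeartbeats 1000000 in
/-- Finite-class uniform deviation of the empirical Pconf multicalibration
estimator: with probability at least `1 − δ` over the positive-confidence
sample, the corrected empirical moments are uniformly close to the population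
moments `R_{c,w}(f)`. Here `r := π₊ · dP₊/dP_X` and `r ≥ C_r` `P₊`-a.e. -/
theorem pconf_finite_class_uniform_deviation {X : Type*} [MeasurableSpace X]
    (Pp Pm : Measure X) [IsProbabilityMeasure Pp] [IsProbabilityMeasure Pm]
    (pip : ℝ) (hpi0 : 0 < pip) (hpi1 : pip < 1)
    (hac : Pm ≪ Pp)
    (Cr : ℝ) (hCr : 0 < Cr)
    (hr : ∀ᵐ x ∂Pp, Cr ≤ pip * (Pp.rnDeriv
        (ENNReal.ofReal pip • Pp + ENNReal.ofReal (1 - pip) • Pm) x).toReal)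
    (C : Finset (X → ℝ)) (W : Finset (ℝ → ℝ))
    (hCne : C.Nonempty) (hWne : W.Nonempty)
    (hC : ∀ c ∈ C, Measurable c ∧ ∀ x, c x ∈ Set.Icc (-1:ℝ) 1)
    (hW : ∀ w ∈ W, Measurable w ∧ ∀ v ∈ Set.Icc (0:ℝ) 1, w v ∈ Set.Icc (-1:ℝ) 1)
    (f : X → ℝ) (hf : Measurable f) (hf01 : ∀ x, f x ∈ Set.Icc (0:ℝ) 1)
    (n : ℕ) (hn : 1 ≤ n)
    (δ : ℝ) (hδ : δ ∈ Set.Ioo (0:ℝ) 1) :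
    ENNReal.ofReal (1 - δ) ≤
      (Measure.pi fun _ : Fin n => Pp)
      {s : Fin n → X |
        ∀ c ∈ C, ∀ w ∈ W,
          |(pip / n * ∑ i, c (s i) * w (f (s i)) *
              (1 - f (s i) / (pip * (Pp.rnDeriv
                (ENNReal.ofReal pip • Pp + ENNReal.ofReal (1 - pip) • Pm) (s i)).toReal)))
            - (pip * ∫ x, c x * w (f x) * (1 - f x) ∂Pp
              - (1 - pip) * ∫ x, c x * w (f x) * f x ∂Pm)|
          ≤ pip * (1 + 1 / Cr) *
              Real.sqrt (2 * Real.log (2 * (C.card : ℝ) * (W.card : ℝ) / δ) / n) } := by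
  set PX : Measure X := ENNReal.ofReal pip • Pp + ENNReal.ofReal (1 - pip) • Pm with hPXdef
  have hpi1' : (0:ℝ) ≤ 1 - pip := by linarith
  haveI : IsFiniteMeasure PX := by
    constructor
    simp only [hPXdef, Measure.add_apply, Measure.smul_apply, smul_eq_mul, measure_univ,
      mul_one]
    exact ENNReal.add_lt_top.mpr ⟨ENNReal.ofReal_lt_top, ENNReal.ofReal_lt_top⟩
  have hPpPX : Pp ≪ PX := by
    refine Measure.AbsolutelyContinuous.mk fun s hs h0 => ?_
    simp only [hPXdef, Measure.add_apply, Measure.smul_apply, smul_eq_mul] at h0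
    rcases add_eq_zero.mp h0 with ⟨h1, _⟩
    rcases mul_eq_zero.mp h1 with h | h
    · exact absurd h (by simp only [ENNReal.ofReal_eq_zero, not_le]; exact hpi0)
    · exact h
  have hPXPp : PX ≪ Pp := by
    refine Measure.AbsolutelyContinuous.mk fun s hs h0 => ?_
    simp only [hPXdef, Measure.add_apply, Measure.smul_apply, smul_eq_mul]
    rw [h0, hac h0, mul_zero, mul_zero, add_zero]
  have hρmeas : Measurable (fun x => (Pp.rnDeriv PX x).toReal) :=
    (Measure.measurable_rnDeriv _ _).ennreal_toReal
  have hρpos : ∀ᵐ x ∂PX, 0 < Pp.rnDeriv PX x :=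
    (Measure.rnDeriv_pos hPpPX).filter_mono hPXPp.ae_le
  have hρlt : ∀ᵐ x ∂PX, Pp.rnDeriv PX x < ⊤ := Measure.rnDeriv_lt_top Pp PX
  have hn0 : (0:ℝ) < n := by exact_mod_cast Nat.lt_of_lt_of_le Nat.zero_lt_one hn
  have hCcard : (1:ℝ) ≤ C.card := by exact_mod_cast Finset.card_pos.mpr hCne
  have hWcard : (1:ℝ) ≤ W.card := by exact_mod_cast Finset.card_pos.mpr hWne
  set ε : ℝ := pip * (1 + 1 / Cr) *
      Real.sqrt (2 * Real.log (2 * (C.card : ℝ) * (W.card : ℝ) / δ) / n) with hεdef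
  set K : ℝ := (C.card : ℝ) * (W.card : ℝ) with hKdef
  have hK1 : (1:ℝ) ≤ K := by rw [hKdef]; nlinarith
  set Q : ℝ := 2 * (C.card : ℝ) * (W.card : ℝ) / δ with hQdef
  have hQ1 : (1:ℝ) < Q := by
    rw [hQdef, lt_div_iff₀ hδ.1]
    nlinarith [hδ.2]
  have hlogQ : (0:ℝ) ≤ Real.log Q := Real.log_nonneg hQ1.le
  set B : ℝ := 1 + 1 / Cr with hBdef
  have hB : (0:ℝ) < B := by rw [hBdef]; positivity
  set ε' : ℝ := B * Real.sqrt (2 * Real.log Q / n) with hε'def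
  have hε'0 : 0 ≤ ε' := by
    rw [hε'def]
    exact mul_nonneg hB.le (Real.sqrt_nonneg _)
  have hεε' : ε = pip * ε' := by rw [hεdef, hε'def]; ring
  have hnum : 2 * Real.exp (-(n:ℝ) * ε'^2 / (2*B^2)) = δ / K := by
    have hsq : ε'^2 = B^2 * (2 * Real.log Q / n) := by
      rw [hε'def, mul_pow, Real.sq_sqrt (by positivity)]
    have hexp : -(n:ℝ) * ε'^2 / (2*B^2) = - Real.log Q := by
      rw [hsq]
      field_simp
    rw [hexp, Real.exp_neg, Real.exp_log (by linarith : (0:ℝ) < Q)]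
    rw [hQdef, hKdef]
    have hδ0 : δ ≠ 0 := ne_of_gt hδ.1
    have hCc : (C.card:ℝ) ≠ 0 := by linarith
    have hWc : (W.card:ℝ) ≠ 0 := by linarith
    field_simp
  -- per-pair bad-event bound
  have key : ∀ c ∈ C, ∀ w ∈ W,
      (Measure.pi fun _ : Fin n => Pp)
        {s : Fin n → X | ¬ (|(pip / n * ∑ i, c (s i) * w (f (s i)) *
            (1 - f (s i) / (pip * (Pp.rnDeriv PX (s i)).toReal)))
          - (pip * ∫ x, c x * w (f x) * (1 - f x) ∂Pp
            - (1 - pip) * ∫ x, c x * w (f x) * f x ∂Pm)| ≤ ε)}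
        ≤ ENNReal.ofReal (δ / K) := by
    intro c hc w hw
    obtain ⟨hcmeas, hcbd⟩ := hC c hc
    obtain ⟨hwmeas, hwbd⟩ := hW w hw
    set g : X → ℝ :=
      fun x => c x * w (f x) * (1 - f x / (pip * (Pp.rnDeriv PX x).toReal)) with hgdef
    have hgmeas : Measurable g :=
      (hcmeas.mul (hwmeas.comp hf)).mul
        (measurable_const.sub (hf.div (measurable_const.mul hρmeas)))
    have habsc : ∀ x, |c x| ≤ 1 := fun x => abs_le.mpr ⟨(hcbd x).1, (hcbd x).2⟩
    have habsw : ∀ x, |w (f x)| ≤ 1 := fun x => abs_le.mpr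
      ⟨(hwbd (f x) (hf01 x)).1, (hwbd (f x) (hf01 x)).2⟩
    have habsf : ∀ x, |f x| ≤ 1 := fun x => abs_le.mpr
      ⟨by linarith [(hf01 x).1], (hf01 x).2⟩
    have hgbd : ∀ᵐ x ∂Pp, |g x| ≤ B := by
      filter_upwards [hr] with x hx
      have hq0 : 0 ≤ f x / (pip * (Pp.rnDeriv PX x).toReal) :=
        div_nonneg (hf01 x).1 (le_trans hCr.le hx)
      have hq1 : f x / (pip * (Pp.rnDeriv PX x).toReal) ≤ 1 / Cr :=
        div_le_div₀ zero_le_one (hf01 x).2 hCr hx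
      have h3 : |1 - f x / (pip * (Pp.rnDeriv PX x).toReal)| ≤ B := by
        rw [hBdef]
        have h1Cr : (0:ℝ) ≤ 1 / Cr := by positivity
        rw [abs_le]
        constructor
        · linarith
        · linarith
      calc |g x| = |c x| * |w (f x)| *
          |1 - f x / (pip * (Pp.rnDeriv PX x).toReal)| := by
            simp only [hgdef]
            rw [abs_mul, abs_mul]
      _ ≤ 1 * 1 * B :=
            mul_le_mul (mul_le_mul (habsc x) (habsw x) (abs_nonneg _) zero_le_one)
              h3 (abs_nonneg _) (by norm_num)
      _ = B := by ring
    -- mean identification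
    have hcwmeas : Measurable (fun x => c x * w (f x)) := hcmeas.mul (hwmeas.comp hf)
    have hhmeas : Measurable (fun x => c x * w (f x) * f x) := hcwmeas.mul hf
    have hcwbd : ∀ x, ‖c x * w (f x)‖ ≤ 1 := fun x => by
      rw [Real.norm_eq_abs, abs_mul]
      exact mul_le_one₀ (habsc x) (abs_nonneg _) (habsw x)
    have hhbd : ∀ x, ‖c x * w (f x) * f x‖ ≤ 1 := fun x => by
      rw [Real.norm_eq_abs, abs_mul]
      exact mul_le_one₀ (by rw [← Real.norm_eq_abs]; exact hcwbd x) (abs_nonneg _) (habsf x)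
    have hcwint : Integrable (fun x => c x * w (f x)) Pp :=
      (integrable_const 1).mono' hcwmeas.aestronglyMeasurable (ae_of_all _ hcwbd)
    have hhintPp : Integrable (fun x => c x * w (f x) * f x) Pp :=
      (integrable_const 1).mono' hhmeas.aestronglyMeasurable (ae_of_all _ hhbd)
    have hhintPm : Integrable (fun x => c x * w (f x) * f x) Pm :=
      (integrable_const 1).mono' hhmeas.aestronglyMeasurable (ae_of_all _ hhbd)
    set F : X → ℝ := fun x => (c x * w (f x) * f x) / (Pp.rnDeriv PX x).toReal with hFdef
    have hFmeas : Measurable F := hhmeas.div hρmeas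
    have hFint : Integrable F Pp := by
      refine (integrable_const (pip/Cr)).mono' hFmeas.aestronglyMeasurable ?_
      filter_upwards [hr] with x hx
      have hρx : 0 < (Pp.rnDeriv PX x).toReal := by nlinarith
      simp only [hFdef]
      rw [Real.norm_eq_abs, abs_div, abs_of_pos hρx,
        div_le_div_iff₀ hρx hCr]
      have h1 := hhbd x
      rw [Real.norm_eq_abs] at h1
      nlinarith [abs_nonneg (c x * w (f x) * f x)]
    have hFPX : ∫ x, F x ∂Pp = ∫ x, c x * w (f x) * f x ∂PX := by
      rw [← MeasureTheory.integral_rnDeriv_smul hPpPX (f := F)]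
      refine integral_congr_ae ?_
      filter_upwards [hρpos, hρlt] with x h0 hlt
      have hρx : (Pp.rnDeriv PX x).toReal ≠ 0 :=
        (ENNReal.toReal_pos h0.ne' hlt.ne).ne'
      simp only [hFdef]
      rw [smul_eq_mul, mul_comm, div_mul_cancel₀ _ hρx]
    have hPXsplit : ∫ x, c x * w (f x) * f x ∂PX
        = pip * ∫ x, c x * w (f x) * f x ∂Pp + (1 - pip) * ∫ x, c x * w (f x) * f x ∂Pm := by
      rw [hPXdef,
        integral_add_measure (hhintPp.smul_measure ENNReal.ofReal_ne_top)
          (hhintPm.smul_measure ENNReal.ofReal_ne_top),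
        integral_smul_measure, integral_smul_measure,
        ENNReal.toReal_ofReal hpi0.le, ENNReal.toReal_ofReal hpi1']
      simp [smul_eq_mul]
    have hgsplit : ∫ x, g x ∂Pp = ∫ x, c x * w (f x) ∂Pp - (1/pip) * ∫ x, F x ∂Pp := by
      have hgeq : ∀ x, g x = c x * w (f x) - (1/pip) * F x := fun x => by
        simp only [hgdef, hFdef]
        ring
      rw [integral_congr_ae (ae_of_all _ hgeq),
        integral_sub hcwint (hFint.const_mul _), integral_const_mul]
    have hfirst : ∫ x, c x * w (f x) * (1 - f x) ∂Pp
        = ∫ x, c x * w (f x) ∂Pp - ∫ x, c x * w (f x) * f x ∂Pp := by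
      rw [← integral_sub hcwint hhintPp]
      refine integral_congr_ae (ae_of_all _ fun x => ?_)
      ring
    have claim : pip * ∫ x, g x ∂Pp
        = pip * ∫ x, c x * w (f x) * (1 - f x) ∂Pp
          - (1 - pip) * ∫ x, c x * w (f x) * f x ∂Pm := by
      rw [hgsplit, hfirst, hFPX, hPXsplit]
      field_simp
      ring
    -- apply Chernoff
    have hcher := chernoff_two_sided Pp g hgmeas B hB hgbd n ε' hε'0
    refine le_trans (measure_mono ?_) (le_trans hcher (le_of_eq (by rw [hnum])))
    intro s hs
    have hs' : ε < |(pip / n * ∑ i, g (s i))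
        - (pip * ∫ x, c x * w (f x) * (1 - f x) ∂Pp
          - (1 - pip) * ∫ x, c x * w (f x) * f x ∂Pm)| := lt_of_not_ge hs
    rw [← claim] at hs'
    have heq1 : (pip / n * ∑ i, g (s i)) - pip * ∫ x, g x ∂Pp
        = (pip / n) * (∑ i, (g (s i) - ∫ x, g x ∂Pp)) := by
      rw [Finset.sum_sub_distrib, Finset.sum_const, Finset.card_univ, Fintype.card_fin,
        nsmul_eq_mul]
      field_simp
    rw [heq1, abs_mul, abs_of_pos (by positivity : (0:ℝ) < pip / n), hεε'] at hs'
    show (n:ℝ) * ε' ≤ |∑ i, (g (s i) - ∫ x, g x ∂Pp)|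
    rw [← mul_le_mul_iff_right₀ (by positivity : (0:ℝ) < pip / n)]
    calc (pip / n) * ((n:ℝ) * ε') = pip * ε' := by field_simp
    _ ≤ (pip / n) * |∑ i, (g (s i) - ∫ x, g x ∂Pp)| := hs'.le
  -- union bound and conclusion
  set Bad : Set (Fin n → X) := ⋃ c ∈ C, ⋃ w ∈ W,
      {s : Fin n → X | ¬ (|(pip / n * ∑ i, c (s i) * w (f (s i)) *
          (1 - f (s i) / (pip * (Pp.rnDeriv PX (s i)).toReal)))
        - (pip * ∫ x, c x * w (f x) * (1 - f x) ∂Pp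
          - (1 - pip) * ∫ x, c x * w (f x) * f x ∂Pm)| ≤ ε)} with hBadDef
  have hBad : (Measure.pi fun _ : Fin n => Pp) Bad ≤ ENNReal.ofReal δ := by
    calc (Measure.pi fun _ : Fin n => Pp) Bad
        ≤ ∑ c ∈ C, (Measure.pi fun _ : Fin n => Pp) (⋃ w ∈ W,
          {s : Fin n → X | ¬ (|(pip / n * ∑ i, c (s i) * w (f (s i)) *
              (1 - f (s i) / (pip * (Pp.rnDeriv PX (s i)).toReal)))
            - (pip * ∫ x, c x * w (f x) * (1 - f x) ∂Pp
              - (1 - pip) * ∫ x, c x * w (f x) * f x ∂Pm)| ≤ ε)}) :=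
          measure_biUnion_finset_le _ _
    _ ≤ ∑ c ∈ C, ∑ w ∈ W, ENNReal.ofReal (δ / K) := by
        refine Finset.sum_le_sum fun c hc => ?_
        refine le_trans (measure_biUnion_finset_le _ _) ?_
        exact Finset.sum_le_sum fun w hw => key c hc w hw
    _ = (C.card : ℝ≥0∞) * ((W.card : ℝ≥0∞) * ENNReal.ofReal (δ / K)) := by
        simp [Finset.sum_const, nsmul_eq_mul, mul_assoc]
    _ = ENNReal.ofReal δ := by
        rw [← ENNReal.ofReal_natCast C.card, ← ENNReal.ofReal_natCast W.card,
          ← ENNReal.ofReal_mul (by positivity), ← ENNReal.ofReal_mul (by positivity)]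
        congr 1
        rw [hKdef]
        have hCc : (C.card:ℝ) ≠ 0 := by linarith
        have hWc : (W.card:ℝ) ≠ 0 := by linarith
        field_simp
  have hcover : (Set.univ : Set (Fin n → X)) ⊆
      {s : Fin n → X |
        ∀ c ∈ C, ∀ w ∈ W,
          |(pip / n * ∑ i, c (s i) * w (f (s i)) *
              (1 - f (s i) / (pip * (Pp.rnDeriv PX (s i)).toReal)))
            - (pip * ∫ x, c x * w (f x) * (1 - f x) ∂Pp
              - (1 - pip) * ∫ x, c x * w (f x) * f x ∂Pm)| ≤ ε} ∪ Bad := by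
    intro s _
    by_cases hsB : s ∈ Bad
    · exact Or.inr hsB
    · left
      intro c hc w hw
      by_contra hne
      exact hsB (Set.mem_biUnion hc (Set.mem_biUnion hw hne))
  have h1 : (1:ℝ≥0∞) ≤ (Measure.pi fun _ : Fin n => Pp)
      {s : Fin n → X |
        ∀ c ∈ C, ∀ w ∈ W,
          |(pip / n * ∑ i, c (s i) * w (f (s i)) *
              (1 - f (s i) / (pip * (Pp.rnDeriv PX (s i)).toReal)))
            - (pip * ∫ x, c x * w (f x) * (1 - f x) ∂Pp
              - (1 - pip) * ∫ x, c x * w (f x) * f x ∂Pm)| ≤ ε}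
      + (Measure.pi fun _ : Fin n => Pp) Bad := by
    have h2 := measure_mono (μ := Measure.pi fun _ : Fin n => Pp) hcover
    rw [measure_univ] at h2
    exact h2.trans (measure_union_le _ _)
  calc ENNReal.ofReal (1 - δ) = 1 - ENNReal.ofReal δ := by
        rw [ENNReal.ofReal_sub 1 hδ.1.le, ENNReal.ofReal_one]
  _ ≤ _ := by
        rw [tsub_le_iff_right]
        exact h1.trans (add_le_add_right hBad _)
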